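/- Let ℓ be a Lyndon word and y a nonempty word, let t, s ≥ 1, let w₁, …, w_t and v₁, …, v_s be (possibly empty) words, and let p₁, …, p_t, q₁, …, q_s be nonnegative integers. Assume, for every index i: (1) every nonempty suffix of w_i and of v_i is strictly greater than y; (2) y is not a factor of w_i nor of v_i; (3) ℓ is not a prefix of w_i nor of v_i; (4) ℓ > y, ℓ > w_i, and ℓ > v_i. Define w = yℓ^{p₁}w₁yℓ^{p₂}w₂⋯yℓ^{p_t}w_t, w' = yℓ^{p₁+1}w₁yℓ^{p₂+1}w₂⋯yℓ^{p_t+1}w_t, v = yℓ^{q₁}v₁yℓ^{q₂}v₂⋯yℓ^{q_s}v_s, and v' = yℓ^{q₁+1}v₁yℓ^{q₂+1}v₂⋯yℓ^{q_s+1}v_s. Then w > v if and only if w' > v'. -/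

import Mathlib

variable {I : Type*} [LinearOrder I]

/-- A word is *Lyndon* if it is nonempty and lexicographically strictly smaller
than each of its proper nonempty suffixes. -/
def IsLyndon (w : List I) : Prop :=
  w ≠ [] ∧ ∀ u v : List I, w = u ++ v → u ≠ [] → v ≠ [] → w < v

/-- The word `yℓ^{p₁}w₁yℓ^{p₂}w₂⋯yℓ^{p_t}w_t` built from a list of pairs
`(pᵢ, wᵢ)`, where `ℓ^p` denotes `p` concatenated copies of `ℓ`. -/
def chunkWordY (y l : List I) (pw : List (ℕ × List I)) : List I :=
  (pw.map fun x => y ++ (List.replicate x.1 l).flatten ++ x.2).flatten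

namespace ChunkAux

lemma nil_lt' {m : List I} (h : m ≠ []) : ([] : List I) < m := by
  cases m with
  | nil => exact absurd rfl h
  | cons a t => exact List.Lex.nil

lemma cancel_lt (u : List I) {a b : List I} : u ++ a < u ++ b ↔ a < b := by
  induction u with
  | nil => simp
  | cons x t ih => exact List.cons_lt_cons_self.trans ih

lemma lt_append {a b : List I} (h : a < b) (hp : ¬ a <+: b) (s t : List I) :
    a ++ s < b ++ t := by
  induction a generalizing b with
  | nil => exact absurd (List.nil_prefix) hp
  | cons x a ih =>
    cases b with
    | nil => exact absurd h (List.not_lt_nil _)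
    | cons z b =>
      have h' : List.Lex (· < ·) (x :: a) (z :: b) := h
      cases h' with
      | cons h2 =>
        exact List.Lex.cons (ih h2 (fun hab => hp (List.cons_prefix_cons.mpr ⟨rfl, hab⟩)) )
      | rel h2 => exact List.Lex.rel h2

lemma chunk_cons (y l : List I) (x : ℕ × List I) (r : List (ℕ × List I)) :
    chunkWordY y l (x :: r)
      = y ++ (List.replicate x.1 l).flatten ++ x.2 ++ chunkWordY y l r := by
  simp [chunkWordY]

lemma chunk_nil (y l : List I) : chunkWordY y l [] = [] := rfl

lemma chunk_shape (y l : List I) (r : List (ℕ × List I)) :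
    chunkWordY y l r = [] ∨ ∃ s, chunkWordY y l r = y ++ s := by
  cases r with
  | nil => exact Or.inl rfl
  | cons x t =>
    refine Or.inr ⟨(List.replicate x.1 l).flatten ++ x.2 ++ chunkWordY y l t, ?_⟩
    simp [chunk_cons]

/-- Claim D: every chunk word is `< l`. -/
lemma chunkD {y l : List I} (hl : IsLyndon l) (hy : y ≠ []) (hly : y < l)
    (pw : List (ℕ × List I)) (hlt : ∀ x ∈ pw, x.2 < l) :
    chunkWordY y l pw < l := by
  induction pw with
  | nil => exact nil_lt' hl.1
  | cons x r ih =>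
    have ihr : chunkWordY y l r < l := ih (fun a ha => hlt a (List.mem_cons_of_mem _ ha))
    rw [chunk_cons]
    by_cases hyp : y <+: l
    · obtain ⟨c, rfl⟩ := hyp
      have hc : c ≠ [] := by rintro rfl; simp at hly
      rw [List.append_assoc, List.append_assoc, cancel_lt]
      cases hx : x.1 with
      | zero =>
        simp only [List.replicate_zero, List.flatten_nil, List.nil_append]
        have hxl : x.2 < y ++ c := hlt x (List.mem_cons_self)
        have hlc : y ++ c < c := hl.2 y c rfl hy hc
        by_cases hwc : x.2 <+: c
        · obtain ⟨e, rfl⟩ := hwc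
          have he : e ≠ [] := by
            rintro rfl; simp at hxl hlc
            exact absurd (lt_trans hxl hlc) (lt_irrefl _)
          rw [cancel_lt]
          have hle : (y ++ (x.2 ++ e)) < e := by
            refine hl.2 (y ++ x.2) e (by simp) (by simp [hy]) he
          exact lt_trans ihr hle
        · have := lt_append (lt_trans hxl hlc) hwc (chunkWordY y (y ++ c) r) []
          simpa using this
      | succ n =>
        simp only [List.replicate_succ, List.flatten_cons, List.append_assoc]
        have hlc : y ++ c < c := hl.2 y c rfl hy hc
        have hnp : ¬ (y ++ c) <+: c := by
          intro hp
          have h1 := hp.length_le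
          have h2 : 0 < y.length := List.length_pos_iff.mpr hy
          rw [List.length_append] at h1
          omega
        have := lt_append hlc hnp ((List.replicate n (y ++ c)).flatten ++ (x.2 ++ chunkWordY y (y ++ c) r)) []
        simpa [List.append_assoc] using this
    · have := lt_append hly hyp ((List.replicate x.1 l).flatten ++ (x.2 ++ chunkWordY y l r)) []
      simpa [List.append_assoc] using this

end ChunkAux

namespace ChunkAux

/-- Claim C: a word `< l` followed by a chunk word is still `< l`. -/
lemma midC {y l v C : List I} (hl : IsLyndon l) (hy : y ≠ []) (hv : v < l) (hC : C < l) :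
    v ++ C < l := by
  by_cases hp : v <+: l
  · obtain ⟨z, rfl⟩ := hp
    have hz : z ≠ [] := by rintro rfl; simp at hv
    rw [cancel_lt]
    cases hvnil : v with
    | nil => subst hvnil; simpa using hC
    | cons a t =>
      have : v ++ z < z := hl.2 v z rfl (by simp [hvnil]) hz
      exact lt_trans hC this
  · simpa using lt_append hv hp C []

/-- Equal-exponent case with different middle words. -/
lemma wordsE {y v w Cq : List I} (hy : y ≠ []) (hvw : v < w)
    (hwsuf : ∀ s : List I, s ≠ [] → s <:+ w → y < s)
    (hwfac : ¬ ∃ a b : List I, w = a ++ y ++ b)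
    (hCq : Cq = [] ∨ ∃ r, Cq = y ++ r) (Cp : List I) :
    v ++ Cq < w ++ Cp := by
  by_cases hp : v <+: w
  · obtain ⟨z, rfl⟩ := hp
    have hz : z ≠ [] := by rintro rfl; simp at hvw
    rw [List.append_assoc, cancel_lt]
    rcases hCq with rfl | ⟨r, rfl⟩
    · exact nil_lt' (by simp [hz])
    · have hyz : y < z := hwsuf z hz ⟨v, rfl⟩
      have hnp : ¬ y <+: z := by
        rintro ⟨b, hb⟩
        exact hwfac ⟨v, b, by rw [← hb]; simp⟩
      exact lt_append hyz hnp r Cp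
  · exact lt_append hvw hp Cq Cp

/-- Strictly smaller exponent gives a strictly smaller chunk word. -/
lemma expLt {y l : List I} (hl : IsLyndon l) (hy : y ≠ []) (hly : y < l)
    (q k : ℕ) (v w : List I) (qt pt : List (ℕ × List I))
    (hvl : v < l) (hqt : ∀ x ∈ qt, x.2 < l) :
    chunkWordY y l ((q, v) :: qt) < chunkWordY y l ((q + (k + 1), w) :: pt) := by
  rw [chunk_cons, chunk_cons]
  have hrep : (List.replicate (q + (k + 1)) l).flatten
      = (List.replicate q l).flatten ++ (l ++ (List.replicate k l).flatten) := by
    rw [List.replicate_add, List.flatten_append, List.replicate_succ, List.flatten_cons]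
  have hbase : v ++ chunkWordY y l qt < l := midC hl hy hvl (chunkD hl hy hly qt hqt)
  have hmain : v ++ chunkWordY y l qt
      < l ++ ((List.replicate k l).flatten ++ (w ++ chunkWordY y l pt)) :=
    List.Lex.append_right _ _ hbase
  have := (cancel_lt (y ++ (List.replicate q l).flatten)).mpr hmain
  simpa [hrep, List.append_assoc] using this

end ChunkAux

namespace ChunkAux

lemma main {y l : List I} (hl : IsLyndon l) (hy : y ≠ []) (hly : y < l) :
    ∀ (qv pw : List (ℕ × List I)),
    (∀ x ∈ qv, ∀ s : List I, s ≠ [] → s <:+ x.2 → y < s) →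
    (∀ x ∈ pw, ∀ s : List I, s ≠ [] → s <:+ x.2 → y < s) →
    (∀ x ∈ qv, ¬ ∃ a b : List I, x.2 = a ++ y ++ b) →
    (∀ x ∈ pw, ¬ ∃ a b : List I, x.2 = a ++ y ++ b) →
    (∀ x ∈ qv, x.2 < l) → (∀ x ∈ pw, x.2 < l) →
    (chunkWordY y l qv < chunkWordY y l pw ↔
      chunkWordY y l (qv.map fun x => (x.1 + 1, x.2)) <
        chunkWordY y l (pw.map fun x => (x.1 + 1, x.2))) := by
  intro qv
  induction qv with
  | nil =>
    intro pw _ _ _ _ _ _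
    cases pw with
    | nil => exact Iff.rfl
    | cons x pt =>
      have h1 : chunkWordY y l (x :: pt) ≠ [] := by simp [chunk_cons, hy]
      have h2 : chunkWordY y l ((x :: pt).map fun x => (x.1 + 1, x.2)) ≠ [] := by
        simp [chunk_cons, hy]
      exact iff_of_true (nil_lt' h1) (nil_lt' h2)
  | cons x qt ih =>
    obtain ⟨q, v⟩ := x
    intro pw hsq hsp hfq hfp hlq hlp
    cases pw with
    | nil =>
      exact iff_of_false (List.not_lt_nil _) (List.not_lt_nil _)
    | cons x' pt =>
      obtain ⟨p, w⟩ := x'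
      have hsq' := fun a ha => hsq a (List.mem_cons_of_mem _ ha)
      have hsp' := fun a ha => hsp a (List.mem_cons_of_mem _ ha)
      have hfq' := fun a ha => hfq a (List.mem_cons_of_mem _ ha)
      have hfp' := fun a ha => hfp a (List.mem_cons_of_mem _ ha)
      have hlq' := fun a ha => hlq a (List.mem_cons_of_mem _ ha)
      have hlp' := fun a ha => hlp a (List.mem_cons_of_mem _ ha)
      have hvl : v < l := hlq _ (List.mem_cons_self)
      have hwl : w < l := hlp _ (List.mem_cons_self)
      rcases lt_trichotomy q p with hqp | rfl | hqp
      · obtain ⟨k, rfl⟩ : ∃ k, p = q + (k + 1) := by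
          refine ⟨p - q - 1, ?_⟩; omega
        refine iff_of_true (expLt hl hy hly q k v w qt pt hvl hlq') ?_
        have h2 := expLt hl hy hly (q + 1) k v w (qt.map fun x => (x.1 + 1, x.2))
          (pt.map fun x => (x.1 + 1, x.2)) hvl
          (by rintro a ha; simp only [List.mem_map] at ha
              obtain ⟨b, hb, rfl⟩ := ha; exact hlq' b hb)
        have : q + (k + 1) + 1 = q + 1 + (k + 1) := by omega
        simpa [this] using h2
      · -- equal exponents
        have e1 : ∀ (n : ℕ) (u : List I) (r : List (ℕ × List I)),
            chunkWordY y l ((n, u) :: r)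
              = (y ++ (List.replicate n l).flatten) ++ (u ++ chunkWordY y l r) := by
          intro n u r; simp [chunk_cons, List.append_assoc]
        rw [show ((((q, v) :: qt).map fun x => (x.1 + 1, x.2)) : List (ℕ × List I))
              = (q + 1, v) :: (qt.map fun x => (x.1 + 1, x.2)) from by simp,
            show ((((q, w) :: pt).map fun x => (x.1 + 1, x.2)) : List (ℕ × List I))
              = (q + 1, w) :: (pt.map fun x => (x.1 + 1, x.2)) from by simp,
            e1, e1, e1, e1, cancel_lt, cancel_lt]
        rcases lt_trichotomy v w with hvw | rfl | hvw
        · refine iff_of_true ?_ ?_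
          · exact wordsE hy hvw (hsp _ (List.mem_cons_self))
              (hfp _ (List.mem_cons_self)) (chunk_shape y l qt) _
          · exact wordsE hy hvw (hsp _ (List.mem_cons_self))
              (hfp _ (List.mem_cons_self)) (chunk_shape y l _) _
        · rw [cancel_lt, cancel_lt]
          exact ih pt hsq' hsp' hfq' hfp' hlq' hlp'
        · refine iff_of_false ?_ ?_
          · exact fun h => absurd h (lt_asymm (wordsE hy hvw
              (hsq _ (List.mem_cons_self)) (hfq _ (List.mem_cons_self))
              (chunk_shape y l pt) _))
          · exact fun h => absurd h (lt_asymm (wordsE hy hvw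
              (hsq _ (List.mem_cons_self)) (hfq _ (List.mem_cons_self))
              (chunk_shape y l _) _))
      · obtain ⟨k, rfl⟩ : ∃ k, q = p + (k + 1) := by
          refine ⟨q - p - 1, ?_⟩; omega
        refine iff_of_false (fun h => absurd h (lt_asymm
          (expLt hl hy hly p k w v pt qt hwl hlp'))) ?_
        have h2 := expLt hl hy hly (p + 1) k w v (pt.map fun x => (x.1 + 1, x.2))
          (qt.map fun x => (x.1 + 1, x.2)) hwl
          (by rintro a ha; simp only [List.mem_map] at ha
              obtain ⟨b, hb, rfl⟩ := ha; exact hlp' b hb)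
        rw [show p + 1 + (k + 1) = p + (k + 1) + 1 from by omega] at h2
        exact fun h => absurd h (lt_asymm (by simpa using h2))

end ChunkAux

/-- Let `ℓ` be Lyndon and `y` nonempty, `w = yℓ^{p₁}w₁⋯yℓ^{p_t}w_t`,
`v = yℓ^{q₁}v₁⋯yℓ^{q_s}v_s` (`t, s ≥ 1`, `wᵢ`, `vⱼ` possibly empty), where:
(1) every nonempty suffix of each `wᵢ`, `vⱼ` is `> y`;
(2) `y` is not a factor of any `wᵢ`, `vⱼ`;
(3) `ℓ` is not a prefix of any `wᵢ`, `vⱼ`;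
(4) `ℓ > y`, `ℓ > wᵢ`, `ℓ > vⱼ`.
Let `w'`, `v'` be obtained by increasing every exponent by `1`.
Then `w > v ↔ w' > v'`. -/
theorem chunkY_lift_gt_iff (y l : List I) (hy : y ≠ []) (hl : IsLyndon l)
    (pw qv : List (ℕ × List I)) (hpw : pw ≠ []) (hqv : qv ≠ [])
    (hw_suf : ∀ x ∈ pw, ∀ s : List I, s ≠ [] → s <:+ x.2 → y < s)
    (hv_suf : ∀ x ∈ qv, ∀ s : List I, s ≠ [] → s <:+ x.2 → y < s)
    (hw_fac : ∀ x ∈ pw, ¬ ∃ a b : List I, x.2 = a ++ y ++ b)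
    (hv_fac : ∀ x ∈ qv, ¬ ∃ a b : List I, x.2 = a ++ y ++ b)
    (hw_pre : ∀ x ∈ pw, ¬ l <+: x.2) (hv_pre : ∀ x ∈ qv, ¬ l <+: x.2)
    (hly : y < l)
    (hw_lt : ∀ x ∈ pw, x.2 < l) (hv_lt : ∀ x ∈ qv, x.2 < l) :
    chunkWordY y l qv < chunkWordY y l pw ↔
      chunkWordY y l (qv.map fun x => (x.1 + 1, x.2)) <
        chunkWordY y l (pw.map fun x => (x.1 + 1, x.2)) := by
  exact ChunkAux.main hl hy hly qv pw hv_suf hw_suf hv_fac hw_fac hv_lt hw_lt
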